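/- If W : ℝ → ℝ is C², nonnegative, convex, vanishes only at 0, and satisfies ∫_{|u|>1} du/√(W(u)) < ∞, then for every λ > 0 the quantity l(λ) = ∫₀^∞ ds/√(2(W(s+λ) − W(λ))) is finite and positive. -/

import Mathlib

open MeasureTheory Set

theorem blowup_length_finite_pos
    (W : ℝ → ℝ) (hW : ContDiff ℝ 2 W) (hWnn : ∀ t, 0 ≤ W t)
    (hWconv : ConvexOn ℝ Set.univ W) (hWvan : ∀ t, W t = 0 ↔ t = 0)
    (hWint : IntegrableOn (fun u => 1 / Real.sqrt (W u)) {u : ℝ | 1 < |u|}) :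
    ∀ lam : ℝ, 0 < lam →
      IntegrableOn (fun s => 1 / Real.sqrt (2 * (W (s + lam) - W lam))) (Ioi (0:ℝ)) ∧
      0 < ∫ s in Ioi (0:ℝ), 1 / Real.sqrt (2 * (W (s + lam) - W lam)) := by
  intro lam hlam
  have hW0 : W 0 = 0 := (hWvan 0).mpr rfl
  have hWlam : 0 < W lam :=
    lt_of_le_of_ne (hWnn lam) (fun h => hlam.ne' ((hWvan lam).mp h.symm))
  set c : ℝ := W lam / lam with hc_def
  have hc : 0 < c := div_pos hWlam hlam
  -- key convexity estimate
  have keyA : ∀ s : ℝ, 0 ≤ s → c * s ≤ W (s + lam) - W lam := by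
    intro s hs
    have hsl : 0 < s + lam := by linarith
    have ha : (0:ℝ) ≤ s / (s + lam) := by positivity
    have hb : (0:ℝ) ≤ lam / (s + lam) := by positivity
    have hab : s / (s + lam) + lam / (s + lam) = 1 := by field_simp
    have h1 := hWconv.2 (mem_univ (0:ℝ)) (mem_univ (s + lam)) ha hb hab
    have heq : (s / (s + lam)) • (0:ℝ) + (lam / (s + lam)) • (s + lam) = lam := by
      simp only [smul_eq_mul, mul_zero, zero_add]
      field_simp
    rw [heq] at h1
    simp only [smul_eq_mul, hW0, mul_zero, zero_add] at h1
    rw [div_mul_eq_mul_div, le_div_iff₀ hsl] at h1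
    rw [hc_def, div_mul_eq_mul_div, div_le_iff₀ hlam]
    nlinarith [h1]
  -- monotonicity on [0, ∞)
  have keyB : ∀ a b : ℝ, 0 ≤ a → a ≤ b → W a ≤ W b := by
    intro a b ha hab
    rcases eq_or_lt_of_le (ha.trans hab) with hb | hb
    · have ha0 : a = 0 := le_antisymm (hab.trans hb.symm.le) ha
      rw [ha0, ← hb]
    · have hd : a / b ≤ 1 := div_le_one_of_le₀ hab hb.le
      have hb1 : (0:ℝ) ≤ 1 - a / b := by linarith
      have hb2 : (0:ℝ) ≤ a / b := by positivity
      have hb3 : (1 - a / b) + a / b = 1 := by ring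
      have h1 := hWconv.2 (mem_univ (0:ℝ)) (mem_univ b) hb1 hb2 hb3
      have heq : (1 - a / b) • (0:ℝ) + (a / b) • b = a := by
        simp only [smul_eq_mul, mul_zero, zero_add]
        field_simp
      rw [heq] at h1
      simp only [smul_eq_mul, hW0, mul_zero, zero_add] at h1
      nlinarith [hWnn b, h1]
  set f : ℝ → ℝ := fun s => 1 / Real.sqrt (2 * (W (s + lam) - W lam)) with hf_def
  have hWc : Continuous W := hW.continuous
  have hcont : Continuous fun s => Real.sqrt (2 * (W (s + lam) - W lam)) := by
    fun_prop
  have hmeas : Measurable f := by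
    exact measurable_const.div hcont.measurable
  set T : ℝ := max 1 (3 * lam) with hT_def
  have hT1 : (1:ℝ) ≤ T := le_max_left _ _
  have hT3 : 3 * lam ≤ T := le_max_right _ _
  have hT0 : (0:ℝ) < T := lt_of_lt_of_le one_pos hT1
  have hfnn : ∀ s, 0 ≤ f s := fun s => by positivity
  -- integrable on Ioc 0 T
  have hint1 : IntegrableOn f (Ioc 0 T) := by
    have hg : IntegrableOn (fun s : ℝ => s ^ (-(1/2) : ℝ)) (Ioc 0 T) := by
      have h := intervalIntegral.intervalIntegrable_rpow' (a := 0) (b := T)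
        (r := -(1/2)) (by norm_num)
      rwa [intervalIntegrable_iff_integrableOn_Ioc_of_le hT0.le] at h
    have hg2 : IntegrableOn (fun s : ℝ => (Real.sqrt (2 * c))⁻¹ * s ^ (-(1/2) : ℝ)) (Ioc 0 T) :=
      hg.const_mul _
    refine hg2.integrable.mono hmeas.aestronglyMeasurable ?_
    rw [ae_restrict_iff' measurableSet_Ioc]
    refine Filter.Eventually.of_forall (fun s hs => ?_)
    have hs0 : 0 < s := hs.1
    have hcs : 0 < 2 * c * s := by positivity
    have hle : 2 * c * s ≤ 2 * (W (s + lam) - W lam) := by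
      have := keyA s hs0.le; nlinarith
    have hb1 : f s ≤ (Real.sqrt (2 * c * s))⁻¹ := by
      rw [hf_def]
      simp only [one_div]
      exact inv_anti₀ (Real.sqrt_pos.mpr hcs) (Real.sqrt_le_sqrt hle)
    have hsqrt : Real.sqrt (2 * c * s) = Real.sqrt (2 * c) * Real.sqrt s := by
      rw [Real.sqrt_mul (by positivity)]
    have hrpow : (Real.sqrt s)⁻¹ = s ^ (-(1/2) : ℝ) := by
      rw [Real.rpow_neg hs0.le, ← Real.sqrt_eq_rpow]
    rw [Real.norm_of_nonneg (hfnn s), Real.norm_of_nonneg (by positivity)]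
    calc f s ≤ (Real.sqrt (2 * c * s))⁻¹ := hb1
      _ = (Real.sqrt (2 * c))⁻¹ * (Real.sqrt s)⁻¹ := by rw [hsqrt, mul_inv]
      _ = (Real.sqrt (2 * c))⁻¹ * s ^ (-(1/2) : ℝ) := by rw [hrpow]
  -- integrable on Ioi T
  have hint2 : IntegrableOn f (Ioi T) := by
    have hg : IntegrableOn (fun u => 1 / Real.sqrt (W u)) (Ioi T) := by
      refine hWint.mono_set (fun u hu => ?_)
      have : (1:ℝ) < u := lt_of_le_of_lt hT1 hu
      simp only [mem_setOf_eq, abs_of_pos (lt_trans one_pos this)]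
      exact this
    refine hg.integrable.mono hmeas.aestronglyMeasurable ?_
    rw [ae_restrict_iff' measurableSet_Ioi]
    refine Filter.Eventually.of_forall (fun s hs => ?_)
    have hs3 : 3 * lam < s := lt_of_le_of_lt hT3 hs
    have hs0 : 0 < s := by linarith
    have hWs : 3 * W lam ≤ W s := by
      have h := keyA (s - lam) (by linarith)
      have : c * (2 * lam) ≤ c * (s - lam) := by
        apply mul_le_mul_of_nonneg_left (by linarith) hc.le
      have hclam : c * lam = W lam := by
        rw [hc_def]; field_simp
      simp only [sub_add_cancel] at h
      nlinarith
    have hWs0 : 0 < W s := by linarith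
    have hmono : W s ≤ W (s + lam) := keyB s (s + lam) hs0.le (by linarith)
    have hle : W s ≤ 2 * (W (s + lam) - W lam) := by nlinarith
    rw [Real.norm_of_nonneg (hfnn s), Real.norm_of_nonneg (by positivity)]
    rw [hf_def]
    simp only [one_div]
    exact inv_anti₀ (Real.sqrt_pos.mpr hWs0) (Real.sqrt_le_sqrt hle)
  have hunion : Ioc (0:ℝ) T ∪ Ioi T = Ioi (0:ℝ) := Ioc_union_Ioi_eq_Ioi hT0.le
  have hint : IntegrableOn f (Ioi (0:ℝ)) := by
    rw [← hunion]; exact hint1.union hint2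
  refine ⟨hint, ?_⟩
  have hsupp : Ioi (0:ℝ) ⊆ Function.support f := by
    intro s hs
    have hs0 : 0 < s := hs
    have hcs : 0 < 2 * c * s := by positivity
    have hle : 2 * c * s ≤ 2 * (W (s + lam) - W lam) := by
      have := keyA s hs0.le; nlinarith
    have hsq : 0 < Real.sqrt (2 * (W (s + lam) - W lam)) :=
      Real.sqrt_pos.mpr (lt_of_lt_of_le hcs hle)
    have : 0 < f s := by
      rw [hf_def]; exact one_div_pos.mpr hsq
    exact this.ne'
  rw [setIntegral_pos_iff_support_of_nonneg_ae
    (Filter.Eventually.of_forall (fun s => hfnn s)) hint]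
  rw [inter_eq_self_of_subset_right hsupp]
  simp [Real.volume_Ioi]
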